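/- The maximum pointwise gap of the McCormick relaxation over the box [x_L,x_U] × [y_L,y_U] equals (x_U − x_L)(y_U − y_L)/4; that is, for any (x,y) in the box, any p satisfying the McCormick inequalities satisfies |p − xy| ≤ (x_U − x_L)(y_U − y_L)/4. -/
import Mathlib

theorem mccormick_gap_bound (x y xL xU yL yU p : ℝ)
    (hxLU : xL < xU) (hyLU : yL < yU)
    (hx1 : xL ≤ x) (hx2 : x ≤ xU) (hy1 : yL ≤ y) (hy2 : y ≤ yU)
    (h1 : p ≥ xL * y + yL * x - xL * yL)
    (h2 : p ≥ xU * y + yU * x - xU * yU)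
    (h3 : p ≤ xL * y + yU * x - xL * yU)
    (h4 : p ≤ xU * y + yL * x - xU * yL) :
    |p - x * y| ≤ (xU - xL) * (yU - yL) / 4 := by
  rw [abs_sub_le_iff]
  constructor
  · -- p - xy ≤ min((x-xL)(yU-y),(xU-x)(y-yL))
    nlinarith [mul_nonneg (sub_nonneg.2 hx1) (sub_nonneg.2 hy2),
      mul_nonneg (sub_nonneg.2 hx2) (sub_nonneg.2 hy1),
      sq_nonneg ((x - xL) - (xU - x)), sq_nonneg ((yU - y) - (y - yL)),
      sq_nonneg ((x - xL) + (xU - x)), sq_nonneg ((yU - y) + (y - yL)),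
      sq_nonneg ((x - xL) * (yU - y) - (xU - x) * (y - yL)),
      mul_nonneg (mul_nonneg (sub_nonneg.2 hx1) (sub_nonneg.2 hy2)) (mul_nonneg (sub_nonneg.2 hx2) (sub_nonneg.2 hy1))]
  · nlinarith [mul_nonneg (sub_nonneg.2 hx1) (sub_nonneg.2 hy1),
      mul_nonneg (sub_nonneg.2 hx2) (sub_nonneg.2 hy2),
      sq_nonneg ((x - xL) - (xU - x)), sq_nonneg ((y - yL) - (yU - y)),
      sq_nonneg ((x - xL) * (y - yL) - (xU - x) * (yU - y)),
      mul_nonneg (mul_nonneg (sub_nonneg.2 hx1) (sub_nonneg.2 hy1)) (mul_nonneg (sub_nonneg.2 hx2) (sub_nonneg.2 hy2))]
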